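/- (TBox-level Ehrenfeucht–Fraïssé characterization for hornALC.) For any finite vocabulary τ, any τ-structures 𝔄 and 𝔅, and any natural number ℓ: 𝔄 ≤^ℓ_hornALC 𝔅 if and only if 𝔄 ⪯^ℓ_horn 𝔅. Moreover, if 𝔄 and 𝔅 are finite, then 𝔄 ≤_hornALC 𝔅 if and only if 𝔄 ⪯_horn 𝔅. -/

import Mathlib

/-- A τ-structure over domain `D`, for a vocabulary with concept names `Con`
(unary predicates) and role names `Rol` (binary predicates). -/
structure Str (Con Rol : Type) (D : Type) where
  conI : Con → Set D
  rolI : Rol → Set (D × D)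

/-- ALC-concepts over the vocabulary `(Con, Rol)`. -/
inductive ALC (Con Rol : Type) where
  | top : ALC Con Rol
  | bot : ALC Con Rol
  | atomic : Con → ALC Con Rol
  | neg : ALC Con Rol → ALC Con Rol
  | disj : ALC Con Rol → ALC Con Rol → ALC Con Rol
  | conj : ALC Con Rol → ALC Con Rol → ALC Con Rol
  | impl : ALC Con Rol → ALC Con Rol → ALC Con Rol
  | ex : Rol → ALC Con Rol → ALC Con Rol
  | all : Rol → ALC Con Rol → ALC Con Rol

variable {Con Rol D D1 D2 : Type}

/-- The extension `C^𝔄` of an ALC-concept in a structure. -/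
def ALC.sem (M : Str Con Rol D) : ALC Con Rol → Set D
  | .top => Set.univ
  | .bot => ∅
  | .atomic A => M.conI A
  | .neg C => (C.sem M)ᶜ
  | .disj C C' => C.sem M ∪ C'.sem M
  | .conj C C' => C.sem M ∩ C'.sem M
  | .impl C C' => (C.sem M)ᶜ ∪ C'.sem M
  | .ex R C => {a | ∃ b, (a, b) ∈ M.rolI R ∧ b ∈ C.sem M}
  | .all R C => {a | ∀ b, (a, b) ∈ M.rolI R → b ∈ C.sem M}

/-- The depth of an ALC-concept: maximal nesting of `∃R` and `∀R`. -/
def ALC.depth : ALC Con Rol → ℕ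
  | .top | .bot | .atomic _ => 0
  | .neg C => C.depth
  | .disj C C' | .conj C C' | .impl C C' => max C.depth C'.depth
  | .ex _ C | .all _ C => C.depth + 1

/-- ELU-concepts: built from concept names and ⊤ using ⊓, ⊔ and ∃R only. -/
inductive ALC.IsELU : ALC Con Rol → Prop
  | top : IsELU .top
  | atomic (A : Con) : IsELU (.atomic A)
  | conj {C C' : ALC Con Rol} : IsELU C → IsELU C' → IsELU (.conj C C')
  | disj {C C' : ALC Con Rol} : IsELU C → IsELU C' → IsELU (.disj C C')
  | ex (R : Rol) {C : ALC Con Rol} : IsELU C → IsELU (.ex R C)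

/-- hornALC-concepts: `H ::= ⊥ | ⊤ | A | H⊓H' | L→H | ∃R.H | ∀R.H` with `L` an ELU-concept. -/
inductive ALC.IsHorn : ALC Con Rol → Prop
  | bot : IsHorn .bot
  | top : IsHorn .top
  | atomic (A : Con) : IsHorn (.atomic A)
  | conj {H H' : ALC Con Rol} : IsHorn H → IsHorn H' → IsHorn (.conj H H')
  | impl {L H : ALC Con Rol} : IsELU L → IsHorn H → IsHorn (.impl L H)
  | ex (R : Rol) {H : ALC Con Rol} : IsHorn H → IsHorn (.ex R H)
  | all (R : Rol) {H : ALC Con Rol} : IsHorn H → IsHorn (.all R H)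

/-- `S` is a simulation between `M` and `N`. -/
def IsSim (M : Str Con Rol D1) (N : Str Con Rol D2) (S : Set (D1 × D2)) : Prop :=
  ∀ a b, (a, b) ∈ S →
    (∀ A, a ∈ M.conI A → b ∈ N.conI A) ∧
    (∀ R a', (a, a') ∈ M.rolI R → ∃ b', (b, b') ∈ N.rolI R ∧ (a', b') ∈ S)

/-- `𝔄,a ⪯_sim 𝔅,b`: some simulation contains `(a,b)`. -/
def Sim (M : Str Con Rol D1) (N : Str Con Rol D2) (a : D1) (b : D2) : Prop :=
  ∃ S, IsSim M N S ∧ (a, b) ∈ S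

/-- The ℓ-round simulation relations `⪯^ℓ_sim`. -/
def SimL (M : Str Con Rol D1) (N : Str Con Rol D2) : ℕ → D1 → D2 → Prop
  | 0 => fun a b => ∀ A, a ∈ M.conI A → b ∈ N.conI A
  | ℓ + 1 => fun a b =>
      (∀ A, a ∈ M.conI A → b ∈ N.conI A) ∧
      ∀ R a', (a, a') ∈ M.rolI R → ∃ b', (b, b') ∈ N.rolI R ∧ SimL M N ℓ a' b'

/-- `X R↑ Y`. -/
def relUp (R : Set (D1 × D1)) (X Y : Set D1) : Prop := ∀ a ∈ X, ∃ b ∈ Y, (a, b) ∈ R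

/-- `X R↓ Y`. -/
def relDown (R : Set (D1 × D1)) (X Y : Set D1) : Prop := ∀ b ∈ Y, ∃ a ∈ X, (a, b) ∈ R

/-- `Z` is a Horn simulation between `M` and `N`. -/
def IsHornSim (M : Str Con Rol D1) (N : Str Con Rol D2) (Z : Set (Set D1 × D2)) : Prop :=
  ∀ X b, (X, b) ∈ Z →
    X.Nonempty ∧
    (∀ A, X ⊆ M.conI A → b ∈ N.conI A) ∧
    (∀ R Y, relUp (M.rolI R) X Y →
        ∃ Y', Y' ⊆ Y ∧ ∃ b', (b, b') ∈ N.rolI R ∧ (Y', b') ∈ Z) ∧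
    (∀ R b', (b, b') ∈ N.rolI R → ∃ Y, relDown (M.rolI R) X Y ∧ (Y, b') ∈ Z) ∧
    (∀ a ∈ X, Sim N M b a)

/-- `𝔄,X ⪯_horn 𝔅,b`: some Horn simulation contains `(X,b)`. -/
def HornSim (M : Str Con Rol D1) (N : Str Con Rol D2) (X : Set D1) (b : D2) : Prop :=
  ∃ Z, IsHornSim M N Z ∧ (X, b) ∈ Z

/-- The ℓ-round Horn simulation relations `⪯^ℓ_horn`. -/
def HornSimL (M : Str Con Rol D1) (N : Str Con Rol D2) : ℕ → Set D1 → D2 → Prop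
  | 0 => fun X b =>
      X.Nonempty ∧ (∀ A, X ⊆ M.conI A → b ∈ N.conI A) ∧ ∀ a ∈ X, SimL N M 0 b a
  | ℓ + 1 => fun X b =>
      (X.Nonempty ∧ (∀ A, X ⊆ M.conI A → b ∈ N.conI A) ∧ ∀ a ∈ X, SimL N M 0 b a) ∧
      (∀ R Y, relUp (M.rolI R) X Y →
          ∃ Y', Y' ⊆ Y ∧ ∃ b', (b, b') ∈ N.rolI R ∧ HornSimL M N ℓ Y' b') ∧
      (∀ R b', (b, b') ∈ N.rolI R → ∃ Y, relDown (M.rolI R) X Y ∧ HornSimL M N ℓ Y b') ∧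
      (∀ a ∈ X, SimL N M (ℓ + 1) b a)

/-- `𝔄,X ≤^ℓ_hornALC 𝔅,b`. -/
def leHornDepth (M : Str Con Rol D1) (N : Str Con Rol D2) (ℓ : ℕ) (X : Set D1) (b : D2) : Prop :=
  ∀ C : ALC Con Rol, C.IsHorn → C.depth ≤ ℓ → X ⊆ C.sem M → b ∈ C.sem N

/-- `𝔄,X ≤_hornALC 𝔅,b`. -/
def leHorn (M : Str Con Rol D1) (N : Str Con Rol D2) (X : Set D1) (b : D2) : Prop :=
  ∀ C : ALC Con Rol, C.IsHorn → X ⊆ C.sem M → b ∈ C.sem N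

/-- `𝔄,a ≤^ℓ_ELU 𝔅,b`. -/
def leELUDepth (M : Str Con Rol D1) (N : Str Con Rol D2) (ℓ : ℕ) (a : D1) (b : D2) : Prop :=
  ∀ C : ALC Con Rol, C.IsELU → C.depth ≤ ℓ → a ∈ C.sem M → b ∈ C.sem N

/-- `𝔄,a ≤_ELU 𝔅,b`. -/
def leELU (M : Str Con Rol D1) (N : Str Con Rol D2) (a : D1) (b : D2) : Prop :=
  ∀ C : ALC Con Rol, C.IsELU → a ∈ C.sem M → b ∈ C.sem N

/-- `𝔄 ≤^ℓ_hornALC 𝔅`: every hornALC-CI `L ⊑ H` of depth ≤ ℓ that holds in `𝔄` holds in `𝔅`. -/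
def leHornCIDepth (M : Str Con Rol D1) (N : Str Con Rol D2) (ℓ : ℕ) : Prop :=
  ∀ L H : ALC Con Rol, L.IsELU → H.IsHorn → L.depth ≤ ℓ → H.depth ≤ ℓ →
    L.sem M ⊆ H.sem M → L.sem N ⊆ H.sem N

/-- `𝔄 ≤_hornALC 𝔅`: every hornALC-CI that holds in `𝔄` holds in `𝔅`. -/
def leHornCI (M : Str Con Rol D1) (N : Str Con Rol D2) : Prop :=
  ∀ L H : ALC Con Rol, L.IsELU → H.IsHorn → L.sem M ⊆ H.sem M → L.sem N ⊆ H.sem N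

/-- `𝔄 ⪯^ℓ_horn 𝔅`: for every `b ∈ dom(𝔅)` there is `X ⊆ dom(𝔄)` with `𝔄,X ⪯^ℓ_horn 𝔅,b`. -/
def globalHornSimL (M : Str Con Rol D1) (N : Str Con Rol D2) (ℓ : ℕ) : Prop :=
  ∀ b : D2, ∃ X : Set D1, HornSimL M N ℓ X b

/-- `𝔄 ⪯_horn 𝔅`: for every `b ∈ dom(𝔅)` there is `X ⊆ dom(𝔄)` with `𝔄,X ⪯_horn 𝔅,b`. -/
def globalHornSim (M : Str Con Rol D1) (N : Str Con Rol D2) : Prop :=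
  ∀ b : D2, ∃ X : Set D1, HornSim M N X b

section EFAux

open Classical

variable {Con Rol D D1 D2 : Type}

/-! ### Basic lemmas on `SimL` -/

lemma simL_succ {M : Str Con Rol D1} {N : Str Con Rol D2} :
    ∀ k (a : D1) (b : D2), SimL M N (k+1) a b → SimL M N k a b := by
  intro k
  induction k with
  | zero => intro a b h; exact h.1
  | succ k ih =>
    intro a b h
    refine ⟨h.1, fun R a' hr => ?_⟩
    obtain ⟨b', hb', hs⟩ := h.2 R a' hr
    exact ⟨b', hb', ih _ _ hs⟩

lemma simL_le {M : Str Con Rol D1} {N : Str Con Rol D2} {j k : ℕ} (h : j ≤ k) :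
    ∀ (a : D1) (b : D2), SimL M N k a b → SimL M N j a b := by
  induction h with
  | refl => exact fun a b hs => hs
  | step _ ih => exact fun a b hs => ih a b (simL_succ _ _ _ hs)

lemma simL_atom {M : Str Con Rol D1} {N : Str Con Rol D2} {k : ℕ} {a : D1} {b : D2}
    (h : SimL M N k a b) : ∀ A, a ∈ M.conI A → b ∈ N.conI A := by
  cases k with
  | zero => exact h
  | succ k => exact h.1

/-! ### ELU preservation under simulations -/

lemma elu_simL {M : Str Con Rol D1} {N : Str Con Rol D2} :
    ∀ (C : ALC Con Rol), C.IsELU → ∀ (k : ℕ), C.depth ≤ k → ∀ (a : D1) (b : D2),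
      SimL M N k a b → a ∈ C.sem M → b ∈ C.sem N := by
  intro C hC
  induction hC with
  | top => intro k _ a b _ _; exact Set.mem_univ b
  | atomic A => intro k _ a b hs ha; exact simL_atom hs A ha
  | @conj C C' h1 h2 ih1 ih2 =>
    intro k hd a b hs ha
    simp only [ALC.depth, max_le_iff] at hd
    exact ⟨ih1 k hd.1 a b hs ha.1, ih2 k hd.2 a b hs ha.2⟩
  | @disj C C' h1 h2 ih1 ih2 =>
    intro k hd a b hs ha
    simp only [ALC.depth, max_le_iff] at hd
    rcases ha with ha | ha
    · exact Or.inl (ih1 k hd.1 a b hs ha)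
    · exact Or.inr (ih2 k hd.2 a b hs ha)
  | @ex R C h ih =>
    intro k hd a b hs ha
    cases k with
    | zero => simp [ALC.depth] at hd
    | succ k =>
      obtain ⟨a', hr, ha'⟩ := ha
      obtain ⟨b', hrb, hs'⟩ := hs.2 R a' hr
      simp only [ALC.depth, Nat.add_le_add_iff_right] at hd
      exact ⟨b', hrb, ih k hd a' b' hs' ha'⟩

lemma elu_sim {M : Str Con Rol D1} {N : Str Con Rol D2} :
    ∀ (C : ALC Con Rol), C.IsELU → ∀ S, IsSim M N S → ∀ (a : D1) (b : D2),
      (a, b) ∈ S → a ∈ C.sem M → b ∈ C.sem N := by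
  intro C hC
  induction hC with
  | top => intro S hS a b _ _; exact Set.mem_univ b
  | atomic A => intro S hS a b hab ha; exact (hS a b hab).1 A ha
  | @conj C C' h1 h2 ih1 ih2 =>
    intro S hS a b hab ha
    exact ⟨ih1 S hS a b hab ha.1, ih2 S hS a b hab ha.2⟩
  | @disj C C' h1 h2 ih1 ih2 =>
    intro S hS a b hab ha
    rcases ha with ha | ha
    · exact Or.inl (ih1 S hS a b hab ha)
    · exact Or.inr (ih2 S hS a b hab ha)
  | @ex R C h ih =>
    intro S hS a b hab ha
    obtain ⟨a', hr, ha'⟩ := ha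
    obtain ⟨b', hrb, hs'⟩ := (hS a b hab).2 R a' hr
    exact ⟨b', hrb, ih S hS a' b' hs' ha'⟩

/-! ### Finite conjunctions -/

def conjL : List (ALC Con Rol) → ALC Con Rol
  | [] => .top
  | C :: l => .conj C (conjL l)

lemma conjL_sem (M : Str Con Rol D) (l : List (ALC Con Rol)) (x : D) :
    x ∈ (conjL l).sem M ↔ ∀ C ∈ l, x ∈ C.sem M := by
  induction l with
  | nil => simp [conjL, ALC.sem]
  | cons C l ih => simp [conjL, ALC.sem, ih, Set.mem_inter_iff]

lemma conjL_elu {l : List (ALC Con Rol)} (h : ∀ C ∈ l, C.IsELU) : (conjL l).IsELU := by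
  induction l with
  | nil => exact .top
  | cons C l ih => exact .conj (h C (by simp)) (ih fun C hC => h C (by simp [hC]))

lemma conjL_horn {l : List (ALC Con Rol)} (h : ∀ C ∈ l, C.IsHorn) : (conjL l).IsHorn := by
  induction l with
  | nil => exact .top
  | cons C l ih => exact .conj (h C (by simp)) (ih fun C hC => h C (by simp [hC]))

lemma conjL_depth {l : List (ALC Con Rol)} {k : ℕ} (h : ∀ C ∈ l, C.depth ≤ k) :
    (conjL l).depth ≤ k := by
  induction l with
  | nil => simp [conjL, ALC.depth]
  | cons C l ih =>
    simp only [conjL, ALC.depth, max_le_iff]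
    exact ⟨h C (by simp), ih fun C hC => h C (by simp [hC])⟩

noncomputable def setConj (s : Set (ALC Con Rol)) (hs : s.Finite) : ALC Con Rol :=
  conjL hs.toFinset.toList

lemma setConj_sem (M : Str Con Rol D) {s : Set (ALC Con Rol)} (hs : s.Finite) (x : D) :
    x ∈ (setConj s hs).sem M ↔ ∀ C ∈ s, x ∈ C.sem M := by
  rw [setConj, conjL_sem]
  constructor
  · intro h C hC; exact h C (by simp [Finset.mem_toList, Set.Finite.mem_toFinset, hC])
  · intro h C hC; exact h C (by simpa [Finset.mem_toList, Set.Finite.mem_toFinset] using hC)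

lemma setConj_elu {s : Set (ALC Con Rol)} (hs : s.Finite) (h : ∀ C ∈ s, C.IsELU) :
    (setConj s hs).IsELU :=
  conjL_elu fun C hC => h C (by simpa [Finset.mem_toList, Set.Finite.mem_toFinset] using hC)

lemma setConj_horn {s : Set (ALC Con Rol)} (hs : s.Finite) (h : ∀ C ∈ s, C.IsHorn) :
    (setConj s hs).IsHorn :=
  conjL_horn fun C hC => h C (by simpa [Finset.mem_toList, Set.Finite.mem_toFinset] using hC)

lemma setConj_depth {s : Set (ALC Con Rol)} (hs : s.Finite) {k : ℕ} (h : ∀ C ∈ s, C.depth ≤ k) :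
    (setConj s hs).depth ≤ k :=
  conjL_depth fun C hC => h C (by simpa [Finset.mem_toList, Set.Finite.mem_toFinset] using hC)

end EFAux
section EFAux2

open Classical

variable {Con Rol D D1 D2 : Type}

/-! ### Finite type of depth-k bisimulation types -/

def Tt (Con Rol : Type) : ℕ → Type
  | 0 => Con → Prop
  | k+1 => (Con → Prop) × (Rol → Set (Tt Con Rol k))

instance ttFinite (Con Rol : Type) [Finite Con] [Finite Rol] (k : ℕ) :
    Finite (Tt Con Rol k) := by
  induction k with
  | zero => show Finite (Con → Prop); infer_instance
  | succ k ih => show Finite ((Con → Prop) × (Rol → Set (Tt Con Rol k))); infer_instance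

def tw (M : Str Con Rol D) : (k : ℕ) → D → Tt Con Rol k
  | 0, a => fun A => a ∈ M.conI A
  | k+1, a => ((fun A => a ∈ M.conI A),
      fun R => {t | ∃ a', (a, a') ∈ M.rolI R ∧ tw M k a' = t})

lemma tw_atom {M : Str Con Rol D1} {N : Str Con Rol D2} :
    ∀ (k : ℕ) (a : D1) (b : D2), tw M k a = tw N k b →
      ∀ A, (a ∈ M.conI A ↔ b ∈ N.conI A) := by
  intro k a b h A
  cases k with
  | zero => exact iff_of_eq (congrFun h A)
  | succ k =>
    have h1 : (tw M (k+1) a).1 = (tw N (k+1) b).1 := congrArg Prod.fst h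
    exact iff_of_eq (congrFun h1 A)

lemma tw_role {M : Str Con Rol D1} {N : Str Con Rol D2} {k : ℕ} {a : D1} {b : D2}
    (h : tw M (k+1) a = tw N (k+1) b) {R : Rol} {a' : D1} (hr : (a, a') ∈ M.rolI R) :
    ∃ b', (b, b') ∈ N.rolI R ∧ tw M k a' = tw N k b' := by
  have h2 : (tw M (k+1) a).2 R = (tw N (k+1) b).2 R := congrFun (congrArg Prod.snd h) R
  have hm : tw M k a' ∈ (tw M (k+1) a).2 R := ⟨a', hr, rfl⟩
  rw [h2] at hm
  obtain ⟨b', hb', ht⟩ := hm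
  exact ⟨b', hb', ht.symm⟩

lemma tw_inv {M : Str Con Rol D1} {N : Str Con Rol D2} :
    ∀ (C : ALC Con Rol) (k : ℕ), C.depth ≤ k → ∀ (a : D1) (b : D2),
      tw M k a = tw N k b → (a ∈ C.sem M ↔ b ∈ C.sem N) := by
  intro C
  induction C with
  | top => intro k _ a b _; simp [ALC.sem]
  | bot => intro k _ a b _; simp [ALC.sem]
  | atomic A => intro k _ a b ht; exact tw_atom k a b ht A
  | neg C ih =>
    intro k hd a b ht
    simp only [ALC.depth] at hd
    simp only [ALC.sem, Set.mem_compl_iff]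
    exact not_congr (ih k hd a b ht)
  | disj C C' ih ih' =>
    intro k hd a b ht
    simp only [ALC.depth, max_le_iff] at hd
    simp only [ALC.sem, Set.mem_union]
    exact or_congr (ih k hd.1 a b ht) (ih' k hd.2 a b ht)
  | conj C C' ih ih' =>
    intro k hd a b ht
    simp only [ALC.depth, max_le_iff] at hd
    simp only [ALC.sem, Set.mem_inter_iff]
    exact and_congr (ih k hd.1 a b ht) (ih' k hd.2 a b ht)
  | impl C C' ih ih' =>
    intro k hd a b ht
    simp only [ALC.depth, max_le_iff] at hd
    simp only [ALC.sem, Set.mem_union, Set.mem_compl_iff]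
    exact or_congr (not_congr (ih k hd.1 a b ht)) (ih' k hd.2 a b ht)
  | ex R C ih =>
    intro k hd a b ht
    cases k with
    | zero => simp [ALC.depth] at hd
    | succ k =>
      simp only [ALC.depth, Nat.add_le_add_iff_right] at hd
      constructor
      · rintro ⟨a', hr, ha⟩
        obtain ⟨b', hb', ht'⟩ := tw_role ht hr
        exact ⟨b', hb', (ih k hd a' b' ht').mp ha⟩
      · rintro ⟨b', hr, hb⟩
        obtain ⟨a', ha', ht'⟩ := tw_role ht.symm hr
        exact ⟨a', ha', (ih k hd a' b' ht'.symm).mpr hb⟩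
  | all R C ih =>
    intro k hd a b ht
    cases k with
    | zero => simp [ALC.depth] at hd
    | succ k =>
      simp only [ALC.depth, Nat.add_le_add_iff_right] at hd
      constructor
      · intro ha b' hr
        obtain ⟨a', ha', ht'⟩ := tw_role ht.symm hr
        exact (ih k hd a' b' ht'.symm).mp (ha a' ha')
      · intro hb a' hr
        obtain ⟨b', hb', ht'⟩ := tw_role ht hr
        exact (ih k hd a' b' ht').mpr (hb b' hb')

end EFAux2
section EFAux3

open Classical

variable {Con Rol D D1 D2 : Type}

/-! ### Characteristic EL concepts -/

noncomputable def atomConj [Finite Con] (t : Con → Prop) : ALC Con Rol :=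
  setConj {C | ∃ A, t A ∧ C = .atomic A}
    (Set.Finite.subset (Set.Finite.image (fun A => ALC.atomic A) (Set.toFinite Set.univ))
      (by rintro C ⟨A, _, rfl⟩; exact ⟨A, trivial, rfl⟩))

lemma atomConj_sem [Finite Con] (M : Str Con Rol D) (t : Con → Prop) (x : D) :
    x ∈ (atomConj t : ALC Con Rol).sem M ↔ ∀ A, t A → x ∈ M.conI A := by
  rw [atomConj, setConj_sem]
  constructor
  · intro h A hA; exact h (.atomic A) ⟨A, hA, rfl⟩
  · rintro h C ⟨A, hA, rfl⟩; exact h A hA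

lemma atomConj_elu [Finite Con] (t : Con → Prop) : (atomConj t : ALC Con Rol).IsELU :=
  setConj_elu _ (by rintro C ⟨A, _, rfl⟩; exact .atomic A)

lemma atomConj_depth [Finite Con] (t : Con → Prop) : (atomConj t : ALC Con Rol).depth = 0 := by
  refine Nat.le_antisymm ?_ (Nat.zero_le _)
  exact setConj_depth _ (by rintro C ⟨A, _, rfl⟩; simp [ALC.depth])

noncomputable def chiT [Finite Con] [Finite Rol] : (k : ℕ) → Tt Con Rol k → ALC Con Rol
  | 0, t => atomConj t
  | k+1, t =>
    .conj (atomConj t.1)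
      (setConj {C | ∃ R c, c ∈ t.2 R ∧ C = .ex R (chiT k c)}
        (Set.Finite.subset
          (Set.Finite.image (fun p : Rol × Tt Con Rol k => ALC.ex p.1 (chiT k p.2))
            (Set.toFinite Set.univ))
          (by rintro C ⟨R, c, _, rfl⟩; exact ⟨(R, c), trivial, rfl⟩)))

lemma chiT_elu [Finite Con] [Finite Rol] : ∀ (k : ℕ) (t : Tt Con Rol k), (chiT k t).IsELU := by
  intro k
  induction k with
  | zero => intro t; exact atomConj_elu t
  | succ k ih =>
    intro t
    exact .conj (atomConj_elu t.1)
      (setConj_elu _ (by rintro C ⟨R, c, _, rfl⟩; exact .ex R (ih c)))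

lemma chiT_depth [Finite Con] [Finite Rol] : ∀ (k : ℕ) (t : Tt Con Rol k),
    (chiT k t).depth ≤ k := by
  intro k
  induction k with
  | zero => intro t; simp [chiT, atomConj_depth]; exact atomConj_depth t
  | succ k ih =>
    intro t
    show max _ _ ≤ k + 1
    refine max_le (le_trans (le_of_eq (atomConj_depth t.1)) (Nat.zero_le _)) ?_
    refine setConj_depth _ ?_
    rintro C ⟨R, c, _, rfl⟩
    show (chiT k c).depth + 1 ≤ k + 1
    exact Nat.add_le_add_right (ih c) 1

/-- The characteristic EL concept of `b` in `N` at depth `k`. -/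
noncomputable def chi [Finite Con] [Finite Rol] (N : Str Con Rol D) (k : ℕ) (b : D) :
    ALC Con Rol :=
  chiT k (tw N k b)

lemma chi_self [Finite Con] [Finite Rol] (N : Str Con Rol D) :
    ∀ (k : ℕ) (b : D), b ∈ (chi N k b).sem N := by
  intro k
  induction k with
  | zero =>
    intro b
    rw [chi]
    show b ∈ (atomConj (tw N 0 b)).sem N
    refine (atomConj_sem (Rol := Rol) N (tw N 0 b) b).mpr ?_
    exact fun A hA => hA
  | succ k ih =>
    intro b
    refine ⟨?_, ?_⟩
    · show b ∈ (atomConj (tw N (k+1) b).1).sem N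
      rw [atomConj_sem]
      exact fun A hA => hA
    · rw [setConj_sem]
      rintro C ⟨R, c, hc, rfl⟩
      obtain ⟨b', hb', rfl⟩ := hc
      exact ⟨b', hb', ih b'⟩

lemma chi_char_fwd [Finite Con] [Finite Rol] {M : Str Con Rol D1} {N : Str Con Rol D2} :
    ∀ (k : ℕ) (b : D2) (a : D1), a ∈ (chi N k b).sem M → SimL N M k b a := by
  intro k
  induction k with
  | zero =>
    intro b a ha
    rw [chi] at ha
    replace ha := (atomConj_sem M (tw N 0 b) a).mp ha
    exact fun A hA => ha A hA
  | succ k ih =>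
    intro b a ha
    obtain ⟨ha1, ha2⟩ := ha
    constructor
    · exact fun A hA => (atomConj_sem M (tw N (k+1) b).1 a).mp ha1 A hA
    · intro R b' hb'
      rw [setConj_sem] at ha2
      have hmem : (ALC.ex R (chiT k (tw N k b')) : ALC Con Rol) ∈
          {C | ∃ R' c, c ∈ (tw N (k+1) b).2 R' ∧ C = .ex R' (chiT k c)} :=
        ⟨R, tw N k b', ⟨b', hb', rfl⟩, rfl⟩
      obtain ⟨a', hra', ha'⟩ := ha2 _ hmem
      exact ⟨a', hra', ih b' a' ha'⟩

lemma chi_char_bwd [Finite Con] [Finite Rol] {M : Str Con Rol D1} {N : Str Con Rol D2}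
    {k : ℕ} {b : D2} {a : D1} (h : SimL N M k b a) : a ∈ (chi N k b).sem M :=
  elu_simL (chi N k b) (chiT_elu k _) k (chiT_depth k _) b a h (chi_self N k b)

/-! ### Finitely many Horn concepts up to semantics over (M, N) -/

lemma horn_reps [Finite Con] [Finite Rol] (M : Str Con Rol D1) (N : Str Con Rol D2) (k : ℕ) :
    ∃ HS : Set (ALC Con Rol), HS.Finite ∧ (∀ H ∈ HS, H.IsHorn ∧ H.depth ≤ k) ∧
      ∀ H : ALC Con Rol, H.IsHorn → H.depth ≤ k →
        ∃ H' ∈ HS, H'.sem M = H.sem M ∧ H'.sem N = H.sem N := by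
  classical
  set S : Set (Set D1 × Set D2) :=
    {p | ∃ H : ALC Con Rol, H.IsHorn ∧ H.depth ≤ k ∧ p = (H.sem M, H.sem N)} with hSdef
  have hSfin : S.Finite := by
    have hsub : S ⊆ (fun uv : Set (Tt Con Rol k) × Set (Tt Con Rol k) =>
        (({a | tw M k a ∈ uv.1} : Set D1), ({b | tw N k b ∈ uv.2} : Set D2))) '' Set.univ := by
      rintro p ⟨H, hh, hd, rfl⟩
      refine ⟨(tw M k '' H.sem M, tw N k '' H.sem N), trivial, ?_⟩
      have e1 : {a | tw M k a ∈ tw M k '' H.sem M} = H.sem M := by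
        ext a
        constructor
        · rintro ⟨a0, ha0, he⟩
          exact (tw_inv H k hd a0 a he).mp ha0
        · intro ha; exact ⟨a, ha, rfl⟩
      have e2 : {b | tw N k b ∈ tw N k '' H.sem N} = H.sem N := by
        ext b
        constructor
        · rintro ⟨b0, hb0, he⟩
          exact (tw_inv H k hd b0 b he).mp hb0
        · intro hb; exact ⟨b, hb, rfl⟩
      simp only [e1, e2]
    exact Set.Finite.subset (Set.Finite.image _ (Set.toFinite _)) hsub
  set g : Set D1 × Set D2 → ALC Con Rol := fun p =>
    if hp : ∃ H : ALC Con Rol, H.IsHorn ∧ H.depth ≤ k ∧ p = (H.sem M, H.sem N)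
    then hp.choose else .top with hgdef
  refine ⟨g '' S, hSfin.image g, ?_, ?_⟩
  · rintro H ⟨p, hp, rfl⟩
    have hp' : ∃ H : ALC Con Rol, H.IsHorn ∧ H.depth ≤ k ∧ p = (H.sem M, H.sem N) := hp
    have hspec := hp'.choose_spec
    rw [hgdef]
    simp only [dif_pos hp']
    exact ⟨hspec.1, hspec.2.1⟩
  · intro H hh hd
    have hpS : (H.sem M, H.sem N) ∈ S := ⟨H, hh, hd, rfl⟩
    have hp' : ∃ H' : ALC Con Rol, H'.IsHorn ∧ H'.depth ≤ k ∧
        ((H.sem M, H.sem N) : Set D1 × Set D2) = (H'.sem M, H'.sem N) := ⟨H, hh, hd, rfl⟩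
    refine ⟨g (H.sem M, H.sem N), ⟨(H.sem M, H.sem N), hpS, rfl⟩, ?_⟩
    have hspec := hp'.choose_spec
    have hg : g (H.sem M, H.sem N) = hp'.choose := by rw [hgdef]; simp only [dif_pos hp']
    rw [hg]
    have := hspec.2.2
    exact ⟨(Prod.mk.injEq _ _ _ _ |>.mp this).1.symm, (Prod.mk.injEq _ _ _ _ |>.mp this).2.symm⟩

end EFAux3
section EFAux4

open Classical

variable {Con Rol D D1 D2 : Type}

/-! ### Basic lemmas on `HornSimL` -/

lemma hornSimL_ne {M : Str Con Rol D1} {N : Str Con Rol D2} {k : ℕ} {X : Set D1} {b : D2}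
    (h : HornSimL M N k X b) : X.Nonempty := by
  cases k with
  | zero => exact h.1
  | succ k => exact h.1.1

lemma hornSimL_atom {M : Str Con Rol D1} {N : Str Con Rol D2} {k : ℕ} {X : Set D1} {b : D2}
    (h : HornSimL M N k X b) : ∀ A, X ⊆ M.conI A → b ∈ N.conI A := by
  cases k with
  | zero => exact h.2.1
  | succ k => exact h.1.2.1

lemma hornSimL_sim {M : Str Con Rol D1} {N : Str Con Rol D2} {k : ℕ} {X : Set D1} {b : D2}
    (h : HornSimL M N k X b) : ∀ a ∈ X, SimL N M k b a := by
  cases k with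
  | zero => exact h.2.2
  | succ k => exact h.2.2.2

lemma hornSimL_succ {M : Str Con Rol D1} {N : Str Con Rol D2} :
    ∀ (k : ℕ) (X : Set D1) (b : D2), HornSimL M N (k+1) X b → HornSimL M N k X b := by
  intro k
  induction k with
  | zero => intro X b h; exact h.1
  | succ k ih =>
    intro X b h
    refine ⟨h.1, ?_, ?_, fun a ha => simL_succ _ _ _ (h.2.2.2 a ha)⟩
    · intro R Y hup
      obtain ⟨Y', h1, b', h2, h3⟩ := h.2.1 R Y hup
      exact ⟨Y', h1, b', h2, ih _ _ h3⟩
    · intro R b' hb'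
      obtain ⟨Y, h1, h2⟩ := h.2.2.1 R b' hb'
      exact ⟨Y, h1, ih _ _ h2⟩

lemma hornSimL_le {M : Str Con Rol D1} {N : Str Con Rol D2} {j k : ℕ} (h : j ≤ k)
    {X : Set D1} {b : D2} (hs : HornSimL M N k X b) : HornSimL M N j X b := by
  induction h with
  | refl => exact hs
  | @step m _ ih => exact ih (hornSimL_succ m X b hs)

/-! ### Soundness: Horn concepts are preserved by Horn simulations -/

lemma horn_sound_L {M : Str Con Rol D1} {N : Str Con Rol D2} :
    ∀ (H : ALC Con Rol), H.IsHorn → ∀ (k : ℕ) (X : Set D1) (b : D2),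
      HornSimL M N k X b → H.depth ≤ k → X ⊆ H.sem M → b ∈ H.sem N := by
  intro H hH
  induction hH with
  | bot =>
    intro k X b hs _ hsub
    obtain ⟨a, ha⟩ := hornSimL_ne hs
    exact absurd (hsub ha) (Set.notMem_empty a)
  | top => intro k X b _ _ _; exact Set.mem_univ b
  | atomic A => intro k X b hs _ hsub; exact hornSimL_atom hs A hsub
  | @conj H1 H2 h1 h2 ih1 ih2 =>
    intro k X b hs hd hsub
    simp only [ALC.depth, max_le_iff] at hd
    exact ⟨ih1 k X b hs hd.1 (fun a ha => (hsub ha).1), ih2 k X b hs hd.2 (fun a ha => (hsub ha).2)⟩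
  | @impl L H1 hL h1 ih =>
    intro k X b hs hd hsub
    simp only [ALC.depth, max_le_iff] at hd
    by_cases hbL : b ∈ L.sem N
    · refine Or.inr (ih k X b hs hd.2 ?_)
      intro a ha
      have haL : a ∈ L.sem M := elu_simL L hL k hd.1 b a (hornSimL_sim hs a ha) hbL
      rcases hsub ha with h | h
      · exact absurd haL h
      · exact h
    · exact Or.inl hbL
  | @ex R H1 h1 ih =>
    intro k X b hs hd hsub
    cases k with
    | zero => simp [ALC.depth] at hd
    | succ k =>
      simp only [ALC.depth, Nat.add_le_add_iff_right] at hd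
      have hup : relUp (M.rolI R) X (H1.sem M) := by
        intro a ha
        obtain ⟨y, hy1, hy2⟩ := hsub ha
        exact ⟨y, hy2, hy1⟩
      obtain ⟨Y', hY'sub, b', hb', hY'⟩ := hs.2.1 R (H1.sem M) hup
      exact ⟨b', hb', ih k Y' b' hY' hd hY'sub⟩
  | @all R H1 h1 ih =>
    intro k X b hs hd hsub
    cases k with
    | zero => simp [ALC.depth] at hd
    | succ k =>
      simp only [ALC.depth, Nat.add_le_add_iff_right] at hd
      intro b' hb'
      obtain ⟨Y, hdown, hY⟩ := hs.2.2.1 R b' hb'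
      refine ih k Y b' hY hd ?_
      intro y hy
      obtain ⟨a, ha, hr⟩ := hdown y hy
      exact hsub ha y hr

lemma horn_sound {M : Str Con Rol D1} {N : Str Con Rol D2} :
    ∀ (H : ALC Con Rol), H.IsHorn → ∀ Z, IsHornSim M N Z → ∀ (X : Set D1) (b : D2),
      (X, b) ∈ Z → X ⊆ H.sem M → b ∈ H.sem N := by
  intro H hH
  induction hH with
  | bot =>
    intro Z hZ X b hXb hsub
    obtain ⟨a, ha⟩ := (hZ X b hXb).1
    exact absurd (hsub ha) (Set.notMem_empty a)
  | top => intro Z hZ X b _ _; exact Set.mem_univ b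
  | atomic A => intro Z hZ X b hXb hsub; exact (hZ X b hXb).2.1 A hsub
  | @conj H1 H2 h1 h2 ih1 ih2 =>
    intro Z hZ X b hXb hsub
    exact ⟨ih1 Z hZ X b hXb (fun a ha => (hsub ha).1), ih2 Z hZ X b hXb (fun a ha => (hsub ha).2)⟩
  | @impl L H1 hL h1 ih =>
    intro Z hZ X b hXb hsub
    by_cases hbL : b ∈ L.sem N
    · refine Or.inr (ih Z hZ X b hXb ?_)
      intro a ha
      obtain ⟨S, hS, hba⟩ := (hZ X b hXb).2.2.2.2 a ha
      have haL : a ∈ L.sem M := elu_sim L hL S hS b a hba hbL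
      rcases hsub ha with h | h
      · exact absurd haL h
      · exact h
    · exact Or.inl hbL
  | @ex R H1 h1 ih =>
    intro Z hZ X b hXb hsub
    have hup : relUp (M.rolI R) X (H1.sem M) := by
      intro a ha
      obtain ⟨y, hy1, hy2⟩ := hsub ha
      exact ⟨y, hy2, hy1⟩
    obtain ⟨Y', hY'sub, b', hb', hY'⟩ := (hZ X b hXb).2.2.1 R (H1.sem M) hup
    exact ⟨b', hb', ih Z hZ Y' b' hY' hY'sub⟩
  | @all R H1 h1 ih =>
    intro Z hZ X b hXb hsub b' hb'
    obtain ⟨Y, hdown, hY⟩ := (hZ X b hXb).2.2.2.1 R b' hb'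
    refine ih Z hZ Y b' hY ?_
    intro y hy
    obtain ⟨a, ha, hr⟩ := hdown y hy
    exact hsub ha y hr

end EFAux4
section EFAux5

open Classical

variable {Con Rol D D1 D2 : Type}

/-- Completeness: if `b` satisfies all depth-`k` Horn consequences of `X` and each element of
`X` `k`-simulates `b`, then `(X, b)` is in the `k`-round Horn simulation relation. -/
lemma lemB [Finite Con] [Finite Rol] (M : Str Con Rol D1) (N : Str Con Rol D2) :
    ∀ (k : ℕ) (X : Set D1) (b : D2), X.Nonempty →
      (∀ a ∈ X, SimL N M k b a) →
      (∀ H : ALC Con Rol, H.IsHorn → H.depth ≤ k → X ⊆ H.sem M → b ∈ H.sem N) →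
      HornSimL M N k X b := by
  intro k
  induction k with
  | zero =>
    intro X b hne hsim hcons
    exact ⟨hne, fun A hXA => hcons (.atomic A) (.atomic A) (by simp [ALC.depth]) hXA, hsim⟩
  | succ k ih =>
    intro X b hne hsim hcons
    refine ⟨⟨hne, fun A hXA => hcons (.atomic A) (.atomic A) (by simp [ALC.depth]) hXA,
      fun a ha => simL_le (Nat.zero_le _) b a (hsim a ha)⟩, ?_, ?_, hsim⟩
    · -- forth
      intro R Y hup
      by_contra hno
      push_neg at hno
      obtain ⟨HS, hHSfin, hHSprop, hHSrep⟩ := horn_reps M N k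
      set Ysub : D2 → Set D1 := fun b' => {y ∈ Y | SimL N M k b' y} with hYsubdef
      have key : ∀ b', ∃ Hc : ALC Con Rol, Hc ∈ insert ALC.top (insert ALC.bot HS) ∧
          ((b, b') ∈ N.rolI R → (Ysub b' ⊆ Hc.sem M ∧ b' ∉ Hc.sem N)) := by
        intro b'
        by_cases hb' : (b, b') ∈ N.rolI R
        · by_cases hY : (Ysub b').Nonempty
          · have hnh : ¬ HornSimL M N k (Ysub b') b' :=
              hno (Ysub b') (fun y hy => hy.1) b' hb'
            have hfail : ¬ (∀ H : ALC Con Rol, H.IsHorn → H.depth ≤ k →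
                Ysub b' ⊆ H.sem M → b' ∈ H.sem N) := by
              intro hc
              exact hnh (ih (Ysub b') b' hY (fun y hy => hy.2) hc)
            push_neg at hfail
            obtain ⟨Hx, hh, hd, hsub, hnb⟩ := hfail
            obtain ⟨H', hH', e1, e2⟩ := hHSrep Hx hh hd
            refine ⟨H', Set.mem_insert_of_mem _ (Set.mem_insert_of_mem _ hH'), fun _ => ?_⟩
            rw [e1, e2]
            exact ⟨hsub, hnb⟩
          · refine ⟨ALC.bot, Set.mem_insert_of_mem _ (Set.mem_insert _ _), fun _ => ?_⟩
            exact ⟨fun y hy => (hY ⟨y, hy⟩).elim, fun h => h⟩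
        · exact ⟨ALC.top, Set.mem_insert _ _, fun h => absurd h hb'⟩
      choose F hFmem hFspec using key
      set CS : Set (ALC Con Rol) :=
        (fun b' => ALC.impl (chi N k b') (F b')) '' {b' | (b, b') ∈ N.rolI R} with hCSdef
      have hCSfin : CS.Finite := by
        refine Set.Finite.subset (Set.Finite.image2 ALC.impl
          (Set.Finite.image (chiT k) (Set.toFinite (Set.univ : Set (Tt Con Rol k))))
          ((hHSfin.insert ALC.bot).insert ALC.top)) ?_
        rintro C ⟨b', _, rfl⟩
        exact Set.mem_image2_of_mem ⟨tw N k b', trivial, rfl⟩ (hFmem b')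
      have hCShorn : ∀ C ∈ CS, C.IsHorn := by
        rintro C ⟨b', _, rfl⟩
        refine .impl (chiT_elu k _) ?_
        rcases hFmem b' with h | h | h
        · rw [h]; exact .top
        · rw [h]; exact .bot
        · exact (hHSprop _ h).1
      have hCSdepth : ∀ C ∈ CS, C.depth ≤ k := by
        rintro C ⟨b', _, rfl⟩
        show max (chi N k b').depth (F b').depth ≤ k
        refine max_le (chiT_depth k _) ?_
        rcases hFmem b' with h | h | h
        · rw [h]; simp [ALC.depth]
        · rw [h]; simp [ALC.depth]
        · exact (hHSprop _ h).2
      set G : ALC Con Rol := setConj CS hCSfin with hGdef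
      have hXsub : X ⊆ (ALC.ex R G).sem M := by
        intro a ha
        obtain ⟨y, hyY, hay⟩ := hup a ha
        refine ⟨y, hay, ?_⟩
        rw [hGdef, setConj_sem]
        rintro C ⟨b', hb', rfl⟩
        by_cases hychi : y ∈ (chi N k b').sem M
        · have hsimy : SimL N M k b' y := chi_char_fwd k b' y hychi
          exact Or.inr ((hFspec b' hb').1 ⟨hyY, hsimy⟩)
        · exact Or.inl hychi
      have hbnot : b ∉ (ALC.ex R G).sem N := by
        rintro ⟨b', hb', hbG⟩
        rw [hGdef, setConj_sem] at hbG
        have hmem : (ALC.impl (chi N k b') (F b') : ALC Con Rol) ∈ CS := ⟨b', hb', rfl⟩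
        rcases hbG _ hmem with h | h
        · exact h (chi_self N k b')
        · exact (hFspec b' hb').2 h
      exact hbnot (hcons (ALC.ex R G) (.ex R (setConj_horn hCSfin hCShorn))
        (by show G.depth + 1 ≤ k + 1
            exact Nat.add_le_add_right (setConj_depth hCSfin hCSdepth) 1) hXsub)
    · -- back
      intro R b' hb'
      refine ⟨{a' | (∃ a ∈ X, (a, a') ∈ M.rolI R) ∧ SimL N M k b' a'},
        fun a' ha' => ha'.1, ?_⟩
      refine ih _ b' ?_ (fun a' ha' => ha'.2) ?_
      · obtain ⟨a0, ha0⟩ := hne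
        obtain ⟨a', hra', hs'⟩ := (hsim a0 ha0).2 R b' hb'
        exact ⟨a', ⟨a0, ha0, hra'⟩, hs'⟩
      · intro H hh hd hsub
        by_contra hnb
        have hXsub : X ⊆ (ALC.all R (.impl (chi N k b') H)).sem M := by
          intro a ha a'' hra''
          by_cases hchi : a'' ∈ (chi N k b').sem M
          · have hsima : SimL N M k b' a'' := chi_char_fwd k b' a'' hchi
            exact Or.inr (hsub ⟨⟨a, ha, hra''⟩, hsima⟩)
          · exact Or.inl hchi
        have hball := hcons (ALC.all R (.impl (chi N k b') H))
          (.all R (.impl (chiT_elu k _) hh))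
          (by show max (chi N k b').depth H.depth + 1 ≤ k + 1
              exact Nat.add_le_add_right (max_le (chiT_depth k _) hd) 1) hXsub
        rcases hball b' hb' with h | h
        · exact h (chi_self N k b')
        · exact hnb h

end EFAux5
section EFAux6

open Classical

variable {Con Rol D D1 D2 : Type}

lemma pigeonNat {α : Type} [Finite α] (f : ℕ → α) : ∃ x, ∀ k, ∃ j, k ≤ j ∧ f j = x := by
  by_contra h
  push_neg at h
  choose g hg using h
  obtain ⟨K, hK⟩ := Set.Finite.bddAbove (Set.finite_range g)
  exact hg (f K) K (hK (Set.mem_range_self (f K))) rfl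

lemma limSim [Finite D1] (M : Str Con Rol D1) (N : Str Con Rol D2) (b : D2) (a : D1)
    (h : ∀ k, SimL N M k b a) : Sim N M b a := by
  refine ⟨{p : D2 × D1 | ∀ k, SimL N M k p.1 p.2}, ?_, fun k => h k⟩
  intro y x hxy
  refine ⟨fun A hA => (hxy 0) A hA, ?_⟩
  intro R y' hr
  have hex : ∀ k, ∃ x', (x, x') ∈ M.rolI R ∧ SimL N M k y' x' :=
    fun k => (hxy (k+1)).2 R y' hr
  choose f hf1 hf2 using hex
  obtain ⟨x', hx'⟩ := pigeonNat f
  refine ⟨x', ?_, ?_⟩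
  · obtain ⟨j, _, hj⟩ := hx' 0
    rw [← hj]; exact hf1 j
  · intro k
    obtain ⟨j, hkj, hj⟩ := hx' k
    rw [← hj]; exact simL_le hkj y' (f j) (hf2 j)

lemma limHorn [Finite D1] [Finite D2] (M : Str Con Rol D1) (N : Str Con Rol D2) :
    IsHornSim M N {p : Set D1 × D2 | ∀ k, HornSimL M N k p.1 p.2} := by
  intro X b hXb
  refine ⟨(hXb 0).1, (hXb 0).2.1, ?_, ?_,
    fun a ha => limSim M N b a (fun k => hornSimL_sim (hXb k) a ha)⟩
  · -- forth
    intro R Y hup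
    have hex : ∀ k, ∃ q : Set D1 × D2,
        q.1 ⊆ Y ∧ (b, q.2) ∈ N.rolI R ∧ HornSimL M N k q.1 q.2 := by
      intro k
      obtain ⟨Y', hY', b', hb', hh⟩ := (hXb (k+1)).2.1 R Y hup
      exact ⟨(Y', b'), hY', hb', hh⟩
    choose f hf1 hf2 hf3 using hex
    obtain ⟨q, hq⟩ := pigeonNat f
    obtain ⟨j0, _, hj0⟩ := hq 0
    refine ⟨q.1, by rw [← hj0]; exact hf1 j0, q.2, by rw [← hj0]; exact hf2 j0, ?_⟩
    show ∀ k, HornSimL M N k q.1 q.2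
    intro k
    obtain ⟨j, hkj, hj⟩ := hq k
    rw [← hj]
    exact hornSimL_le hkj (hf3 j)
  · -- back
    intro R b' hb'
    have hex : ∀ k, ∃ Y : Set D1, relDown (M.rolI R) X Y ∧ HornSimL M N k Y b' :=
      fun k => (hXb (k+1)).2.2.1 R b' hb'
    choose f hf1 hf2 using hex
    obtain ⟨Y, hY⟩ := pigeonNat f
    obtain ⟨j0, _, hj0⟩ := hY 0
    refine ⟨Y, by rw [← hj0]; exact hf1 j0, ?_⟩
    show ∀ k, HornSimL M N k Y b'
    intro k
    obtain ⟨j, hkj, hj⟩ := hY k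
    rw [← hj]
    exact hornSimL_le hkj (hf2 j)

end EFAux6
/-- **TBox-level Ehrenfeucht–Fraïssé characterization for hornALC.**
For any finite vocabulary τ, τ-structures `𝔄` and `𝔅`, and any `ℓ < ω`:
`𝔄 ≤^ℓ_hornALC 𝔅` iff `𝔄 ⪯^ℓ_horn 𝔅`.  If `𝔄` and `𝔅` are finite, then
`𝔄 ≤_hornALC 𝔅` iff `𝔄 ⪯_horn 𝔅`. -/
theorem hornALC_ef_game_tbox {Con Rol : Type} [Fintype Con] [Fintype Rol]
    {D1 D2 : Type} [Nonempty D1] [Nonempty D2]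
    (M : Str Con Rol D1) (N : Str Con Rol D2) :
    (∀ ℓ : ℕ, leHornCIDepth M N ℓ ↔ globalHornSimL M N ℓ) ∧
    (Finite D1 → Finite D2 → (leHornCI M N ↔ globalHornSim M N)) := by
  constructor
  · intro ℓ
    constructor
    · -- ⇒ : from CI preservation to the global ℓ-round Horn simulation
      intro hle b
      refine ⟨{a | SimL N M ℓ b a}, lemB M N ℓ _ b ?_ (fun a ha => ha) ?_⟩
      · -- nonemptiness
        by_contra hne
        rw [Set.not_nonempty_iff_eq_empty] at hne
        have hsub : (chi N ℓ b).sem M ⊆ (ALC.bot : ALC Con Rol).sem M := by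
          intro a ha
          have : a ∈ ({a | SimL N M ℓ b a} : Set D1) := chi_char_fwd ℓ b a ha
          rw [hne] at this
          exact this.elim
        exact (hle (chi N ℓ b) ALC.bot (chiT_elu ℓ _) .bot (chiT_depth ℓ _)
          (by simp [ALC.depth]) hsub (chi_self N ℓ b)).elim
      · -- Horn consequences
        intro H hh hd hsub
        exact hle (chi N ℓ b) H (chiT_elu ℓ _) hh (chiT_depth ℓ _) hd
          (fun a ha => hsub (chi_char_fwd ℓ b a ha)) (chi_self N ℓ b)
    · -- ⇐ : soundness
      intro hg L H hL hH hdL hdH hMN b hbL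
      obtain ⟨X, hX⟩ := hg b
      have hsim := hornSimL_sim hX
      have hXL : X ⊆ L.sem M := fun a ha => elu_simL L hL ℓ hdL b a (hsim a ha) hbL
      exact horn_sound_L H hH ℓ X b hX hdH (fun a ha => hMN (hXL ha))
  · intro hD1 hD2
    constructor
    · -- ⇒
      intro hle b
      set X : Set D1 := {a | ∀ k, SimL N M k b a} with hXdef
      have hstab : ∃ K, {a | SimL N M K b a} ⊆ X := by
        classical
        set g : D1 → ℕ := fun a => if h : ∃ k, ¬ SimL N M k b a then h.choose else 0 with hgdef
        obtain ⟨K, hK⟩ := Set.Finite.bddAbove (Set.finite_range g)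
        refine ⟨K, fun a ha k => ?_⟩
        by_contra hns
        have hx : ∃ k, ¬ SimL N M k b a := ⟨k, hns⟩
        have hga : g a = hx.choose := by rw [hgdef]; simp only [dif_pos hx]
        have hle' : g a ≤ K := hK (Set.mem_range_self a)
        have : SimL N M (g a) b a := simL_le (hga ▸ hle') b a ha
        rw [hga] at this
        exact hx.choose_spec this
      obtain ⟨K, hKsub⟩ := hstab
      have hcons : ∀ H : ALC Con Rol, H.IsHorn → X ⊆ H.sem M → b ∈ H.sem N := by
        intro H hh hsub
        have hchisub : (chi N K b).sem M ⊆ H.sem M :=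
          fun a ha => hsub (hKsub (chi_char_fwd K b a ha))
        exact hle (chi N K b) H (chiT_elu K _) hh hchisub (chi_self N K b)
      have hne : X.Nonempty := by
        by_contra hne
        rw [Set.not_nonempty_iff_eq_empty] at hne
        exact (hcons ALC.bot .bot (by rw [hne]; exact Set.empty_subset _)).elim
      refine ⟨X, {p : Set D1 × D2 | ∀ k, HornSimL M N k p.1 p.2}, limHorn M N, ?_⟩
      show ∀ k, HornSimL M N k X b
      intro k
      exact lemB M N k X b hne (fun a ha => ha k) (fun H hh _ hsub => hcons H hh hsub)
    · -- ⇐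
      intro hg L H hL hH hMN b hbL
      obtain ⟨X, Z, hZ, hXb⟩ := hg b
      have hXL : X ⊆ L.sem M := by
        intro a ha
        obtain ⟨S, hS, hba⟩ := (hZ X b hXb).2.2.2.2 a ha
        exact elu_sim L hL S hS b a hba hbL
      exact horn_sound H hH Z hZ X b hXb (fun a ha => hMN (hXL ha))
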